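/- arXiv:math/0508636 — 2 statements merged into one kernel-verified Lean document; each statement's English description precedes it below -/
import Mathlib

section
/- Let A be the mechanical connection on Q → Q/G for a free isometric G-action, μ ∈ 𝔤*, and α_μ(q) = A(q)*μ. Then for each q ∈ Q, α_μ(q) is the unique minimizer of the kinetic energy K(β_q) = ½‖β_q‖² over all β_q ∈ J⁻¹(μ) ∩ T*_qQ, where the norm on covectors is induced by the Riemannian metric. -/
noncomputable section

/-- for the mechanical connection `A` on `Q → Q/G` and `μ ∈ 𝔤*`,
the covector `α_μ(q) = A(q)*μ` (represented here through its metric sharp `u`,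
i.e. `⟨⟨u, v⟩⟩ = ⟨μ, A(q)(v)⟩` for all `v`) is the unique minimizer of the
kinetic energy `K(β) = ½‖β‖²` over the affine subspace
`J⁻¹(μ) ∩ T_q*Q = {β : β(ξ_Q(q)) = ⟨μ, ξ⟩ for all ξ}` (covectors `β`
represented by their sharps `w`, with `K(w♭) = ½⟨⟨w, w⟩⟩`). -/
theorem alpha_mu_minimizes_kinetic_energy
    {E : Type*} [NormedAddCommGroup E] [NormedSpace ℝ E]
    {𝔤 : Type*} [NormedAddCommGroup 𝔤] [NormedSpace ℝ 𝔤]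
    {G : Type*} [Group G]
    (Φ : G → E → E)
    (hone : ∀ q, Φ 1 q = q)
    (hmul : ∀ g h q, Φ (g * h) q = Φ g (Φ h q))
    (exp : 𝔤 → G)
    -- the Riemannian metric at q
    (met : E → E →L[ℝ] E →L[ℝ] ℝ)
    (hmetsymm : ∀ q u v, met q u v = met q v u)
    (hmetpos : ∀ q v, v ≠ 0 → 0 < met q v v)
    -- infinitesimal generators and freeness
    (gen : E → 𝔤 →L[ℝ] E)
    (hgen : ∀ q ξ, gen q ξ = deriv (fun t : ℝ => Φ (exp (t • ξ)) q) 0)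
    (hfree : ∀ q ξ, gen q ξ = 0 → ξ = 0)
    -- the mechanical connection: defining identity of A(q) = 𝕀(q)⁻¹ J(·♭)
    (A : E → E →L[ℝ] 𝔤)
    (hAdef : ∀ q v η, met q (gen q (A q v)) (gen q η) = met q v (gen q η))
    (μ : 𝔤 →L[ℝ] ℝ) (q : E)
    -- u = α_μ(q)♯ : the metric representative of α_μ(q) = A(q)*μ
    (u : E) (hu : ∀ v, met q u v = μ (A q v)) :
    (∀ ξ, met q u (gen q ξ) = μ ξ) ∧
    (∀ w : E, (∀ ξ, met q w (gen q ξ) = μ ξ) →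
      (1 / 2) * met q u u ≤ (1 / 2) * met q w w) ∧
    (∀ w : E, (∀ ξ, met q w (gen q ξ) = μ ξ) →
      (1 / 2) * met q w w = (1 / 2) * met q u u → w = u) := by
  have hmetzero : ∀ v : E, met q v v = 0 → v = 0 := by
    intro v hv
    by_contra h
    exact absurd hv (ne_of_gt (hmetpos q v h))
  have hmetnn : ∀ v : E, 0 ≤ met q v v := by
    intro v
    by_cases h : v = 0
    · simp [h]
    · exact le_of_lt (hmetpos q v h)
  -- A q (gen q ξ) = ξ
  have hAgen : ∀ ξ : 𝔤, A q (gen q ξ) = ξ := by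
    intro ξ
    have hdiff : ∀ η, met q (gen q (A q (gen q ξ) - ξ)) (gen q η) = 0 := by
      intro η
      have h1 := hAdef q (gen q ξ) η
      simp only [map_sub, ContinuousLinearMap.sub_apply]
      rw [h1]
      ring
    have h0 : gen q (A q (gen q ξ) - ξ) = 0 :=
      hmetzero _ (hdiff (A q (gen q ξ) - ξ))
    have := hfree q _ h0
    exact sub_eq_zero.mp this
  -- part 1
  have part1 : ∀ ξ, met q u (gen q ξ) = μ ξ := by
    intro ξ
    rw [hu (gen q ξ), hAgen ξ]
  -- A q v = 0 whenever v is orthogonal to all generators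
  have hAker : ∀ v : E, (∀ η, met q v (gen q η) = 0) → A q v = 0 := by
    intro v hv
    apply hfree q
    apply hmetzero
    rw [hAdef q v (A q v)]
    exact hv (A q v)
  -- key orthogonality: for w in the constraint set, met q u (w - u) = 0
  have horth : ∀ w : E, (∀ ξ, met q w (gen q ξ) = μ ξ) → met q u (w - u) = 0 := by
    intro w hw
    have hA0 : A q (w - u) = 0 := by
      apply hAker
      intro η
      simp only [map_sub, ContinuousLinearMap.sub_apply]
      rw [hw η, part1 η]
      ring
    rw [hu (w - u), hA0]
    simp
  have hexpand : ∀ w : E, (∀ ξ, met q w (gen q ξ) = μ ξ) →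
      met q w w = met q u u + met q (w - u) (w - u) := by
    intro w hw
    have ho := horth w hw
    have ho' : met q (w - u) u = 0 := by rw [hmetsymm q (w - u) u, ← ho]
    have : met q w w = met q ((w - u) + u) ((w - u) + u) := by
      rw [sub_add_cancel]
    rw [this]
    simp only [map_add, ContinuousLinearMap.add_apply]
    rw [ho'] at *
    have ho'' : met q u (w - u) = 0 := ho
    rw [ho'']
    ring
  refine ⟨part1, ?_, ?_⟩
  · intro w hw
    have := hexpand w hw
    have := hmetnn (w - u)
    linarith [hexpand w hw]
  · intro w hw heq
    have h1 := hexpand w hw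
    have h2 : met q (w - u) (w - u) = 0 := by linarith
    have := hmetzero _ h2
    exact sub_eq_zero.mp this
end
end

section
/- For the heavy top bracket on ℝ³ × ℝ³ and Hamiltonian h(Π,Γ) = ½ Π·𝕀⁻¹Π + Mgℓ Γ·χ, where 𝕀 = diag(I₁,I₂,I₃) with I_i > 0, M, g, ℓ ∈ ℝ, and χ ∈ ℝ³ fixed, the Hamiltonian equations Ḟ = {F, h} for the coordinate functions yield exactly the heavy top equations Π̇ = Π × Ω + Mgℓ Γ × χ, Γ̇ = Γ × Ω, where Ω = 𝕀⁻¹Π. -/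
open Matrix

noncomputable section

abbrev V3 := Fin 3 → ℝ

/-- Partial gradient in the first (`Π`) factor. -/
def gradP (f : V3 × V3 → ℝ) (x : V3 × V3) : V3 :=
  fun i => fderiv ℝ f x (Pi.single i 1, 0)

/-- Partial gradient in the second (`Γ`) factor. -/
def gradG (f : V3 × V3 → ℝ) (x : V3 × V3) : V3 :=
  fun i => fderiv ℝ f x (0, Pi.single i 1)

/-- The heavy top (Lie–Poisson) bracket on `ℝ³ × ℝ³ ≅ 𝔰𝔢(3)*`. -/
def ht (f g : V3 × V3 → ℝ) (x : V3 × V3) : ℝ :=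
  -(x.1 ⬝ᵥ crossProduct (gradP f x) (gradP g x))
    - x.2 ⬝ᵥ (crossProduct (gradP f x) (gradG g x)
        - crossProduct (gradP g x) (gradG f x))

private def Pk (k : Fin 3) : (V3 × V3) →L[ℝ] ℝ :=
  (ContinuousLinearMap.proj k).comp (ContinuousLinearMap.fst ℝ V3 V3)

private def Gk (k : Fin 3) : (V3 × V3) →L[ℝ] ℝ :=
  (ContinuousLinearMap.proj k).comp (ContinuousLinearMap.snd ℝ V3 V3)

private lemma gradP_fst (x : V3 × V3) (i j : Fin 3) :
    gradP (fun y => y.1 i) x j = if i = j then 1 else 0 := by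
  have : fderiv ℝ (fun y : V3 × V3 => y.1 i) x = Pk i := (Pk i).hasFDerivAt.fderiv
  simp [gradP, this, Pk, Pi.single_apply]

private lemma gradG_fst (x : V3 × V3) (i j : Fin 3) :
    gradG (fun y => y.1 i) x j = 0 := by
  have : fderiv ℝ (fun y : V3 × V3 => y.1 i) x = Pk i := (Pk i).hasFDerivAt.fderiv
  simp [gradG, this, Pk]

private lemma gradP_snd (x : V3 × V3) (i j : Fin 3) :
    gradP (fun y => y.2 i) x j = 0 := by
  have : fderiv ℝ (fun y : V3 × V3 => y.2 i) x = Gk i := (Gk i).hasFDerivAt.fderiv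
  simp [gradP, this, Gk]

private lemma gradG_snd (x : V3 × V3) (i j : Fin 3) :
    gradG (fun y => y.2 i) x j = if i = j then 1 else 0 := by
  have : fderiv ℝ (fun y : V3 × V3 => y.2 i) x = Gk i := (Gk i).hasFDerivAt.fderiv
  simp [gradG, this, Gk, Pi.single_apply]

private lemma hasFDerivAt_ham (I : Fin 3 → ℝ) (c : ℝ) (χ : V3) (x : V3 × V3) :
    HasFDerivAt
      (fun y : V3 × V3 => (1 / 2 : ℝ) * (y.1 ⬝ᵥ fun j => y.1 j / I j) + c * (y.2 ⬝ᵥ χ))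
      ((1 / 2 : ℝ) • (∑ k : Fin 3,
          (x.1 k • ((I k)⁻¹ • Pk k) + (x.1 k * (I k)⁻¹) • Pk k))
        + c • (∑ k : Fin 3, (χ k) • Gk k)) x := by
  have hfun : (fun y : V3 × V3 => (1 / 2 : ℝ) * (y.1 ⬝ᵥ fun j => y.1 j / I j) + c * (y.2 ⬝ᵥ χ))
      = fun y => (1 / 2 : ℝ) * (∑ k : Fin 3, Pk k y * (Pk k y * (I k)⁻¹))
          + c * (∑ k : Fin 3, Gk k y * χ k) := by
    funext y
    simp [dotProduct, Pk, Gk, div_eq_mul_inv]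
  rw [hfun]
  exact HasFDerivAt.add
    ((HasFDerivAt.sum (fun k (_ : k ∈ Finset.univ) =>
      ((Pk k).hasFDerivAt (x := x)).mul (((Pk k).hasFDerivAt).mul_const (I k)⁻¹))).const_mul
        (1 / 2 : ℝ))
    ((HasFDerivAt.sum (fun k (_ : k ∈ Finset.univ) =>
      ((Gk k).hasFDerivAt (x := x)).mul_const (χ k))).const_mul c)

private lemma gradP_ham (I : Fin 3 → ℝ) (hI : ∀ i, 0 < I i) (c : ℝ) (χ : V3) (x : V3 × V3)
    (i : Fin 3) :
    gradP (fun y : V3 × V3 => (1 / 2 : ℝ) * (y.1 ⬝ᵥ fun j => y.1 j / I j) + c * (y.2 ⬝ᵥ χ)) x i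
      = x.1 i / I i := by
  rw [gradP, (hasFDerivAt_ham I c χ x).fderiv]
  simp only [ContinuousLinearMap.add_apply, ContinuousLinearMap.smul_apply,
    ContinuousLinearMap.coe_sum', Finset.sum_apply, ContinuousLinearMap.comp_apply,
    ContinuousLinearMap.coe_fst', ContinuousLinearMap.coe_snd',
    ContinuousLinearMap.proj_apply, Pk, Gk, smul_eq_mul, Pi.single_apply]
  rw [Finset.sum_congr rfl (fun k _ => by
    split_ifs with hk
    · subst hk; ring
    · simp [hk] : ∀ k ∈ Finset.univ,
      (x.1 k * ((I k)⁻¹ * if k = i then (1:ℝ) else 0)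
        + x.1 k * (I k)⁻¹ * if k = i then (1:ℝ) else 0)
      = if k = i then x.1 i * (I i)⁻¹ + x.1 i * (I i)⁻¹ else 0)]
  simp [Finset.sum_ite_eq', div_eq_mul_inv]
  ring

private lemma gradG_ham (I : Fin 3 → ℝ) (c : ℝ) (χ : V3) (x : V3 × V3) (i : Fin 3) :
    gradG (fun y : V3 × V3 => (1 / 2 : ℝ) * (y.1 ⬝ᵥ fun j => y.1 j / I j) + c * (y.2 ⬝ᵥ χ)) x i
      = c * χ i := by
  rw [gradG, (hasFDerivAt_ham I c χ x).fderiv]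
  simp only [ContinuousLinearMap.add_apply, ContinuousLinearMap.smul_apply,
    ContinuousLinearMap.coe_sum', Finset.sum_apply, ContinuousLinearMap.comp_apply,
    ContinuousLinearMap.coe_fst', ContinuousLinearMap.coe_snd',
    ContinuousLinearMap.proj_apply, Pk, Gk, smul_eq_mul, Pi.single_apply]
  simp [Finset.sum_ite_eq', mul_comm]

/-- for the heavy top Hamiltonian
`h(Π,Γ) = ½ Π⬝𝕀⁻¹Π + MgℓΓ⬝χ` (`𝕀 = diag(I₁,I₂,I₃)`, `Iᵢ > 0`), the Hamiltonian
equations `Ḟ = {F,h}` for the coordinate functions give exactly the heavy top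
equations `Π̇ = Π × Ω + Mgℓ Γ × χ`, `Γ̇ = Γ × Ω`, with `Ω = 𝕀⁻¹Π`. -/
theorem heavy_top_equations
    (I : Fin 3 → ℝ) (hI : ∀ i, 0 < I i)
    (M g ℓ : ℝ) (χ : V3)
    (Om : V3 × V3 → V3) (hOm : Om = fun x => fun j => x.1 j / I j)
    (h : V3 × V3 → ℝ)
    (hh : h = fun x => (1 / 2) * (x.1 ⬝ᵥ Om x) + M * g * ℓ * (x.2 ⬝ᵥ χ)) :
    (∀ (x : V3 × V3) (i : Fin 3),
      ht (fun y => y.1 i) h x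
        = (crossProduct x.1 (Om x) + (M * g * ℓ) • crossProduct x.2 χ) i) ∧
    (∀ (x : V3 × V3) (i : Fin 3),
      ht (fun y => y.2 i) h x = crossProduct x.2 (Om x) i) := by
  subst hOm
  subst hh
  have hgP : ∀ (x : V3 × V3) (i : Fin 3), gradP
      (fun y : V3 × V3 => (1 / 2 : ℝ) * (y.1 ⬝ᵥ fun j => y.1 j / I j)
        + M * g * ℓ * (y.2 ⬝ᵥ χ)) x i = x.1 i / I i :=
    fun x i => gradP_ham I hI (M * g * ℓ) χ x i
  have hgG : ∀ (x : V3 × V3) (i : Fin 3), gradG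
      (fun y : V3 × V3 => (1 / 2 : ℝ) * (y.1 ⬝ᵥ fun j => y.1 j / I j)
        + M * g * ℓ * (y.2 ⬝ᵥ χ)) x i = M * g * ℓ * χ i :=
    fun x i => gradG_ham I (M * g * ℓ) χ x i
  constructor <;> intro x i
  · have e1 : gradP (fun y : V3 × V3 => y.1 i) x = fun j => if i = j then 1 else 0 :=
      funext fun j => gradP_fst x i j
    have e2 : gradG (fun y : V3 × V3 => y.1 i) x = fun _ => 0 :=
      funext fun j => gradG_fst x i j
    have e3 := funext (hgP x)
    have e4 := funext (hgG x)
    simp only [ht, e1, e2, e3, e4]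
    simp only [cross_apply, dotProduct, Fin.sum_univ_three, Pi.add_apply,
      Pi.smul_apply, smul_eq_mul, Pi.sub_apply]
    fin_cases i <;> simp <;> ring
  · have e1 : gradP (fun y : V3 × V3 => y.2 i) x = fun _ => 0 :=
      funext fun j => gradP_snd x i j
    have e2 : gradG (fun y : V3 × V3 => y.2 i) x = fun j => if i = j then 1 else 0 :=
      funext fun j => gradG_snd x i j
    have e3 := funext (hgP x)
    have e4 := funext (hgG x)
    simp only [ht, e1, e2, e3, e4]
    simp only [cross_apply, dotProduct, Fin.sum_univ_three, Pi.add_apply,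
      Pi.smul_apply, smul_eq_mul, Pi.sub_apply]
    fin_cases i <;> simp <;> ring
end
end
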